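/- arXiv:1401.6133 — 3 statements merged into one kernel-verified Lean document; each statement's English description precedes it below -/
import Mathlib

section
/- Let n ≥ 5 be an integer and s ∈ (0,2). Define Φ : ℝⁿ → ℝ by Φ(X) = (1 + |X|^{2-s})^{-(n-2)/(2-s)}. Then ∫_{ℝⁿ} |X|² |∇Φ|² dX / ∫_{ℝⁿ} Φ² dX = n(n-2)(n+2-s) / (2(2n-2-s)). -/
open Real MeasureTheory Set Filter InnerProductSpace

lemma myMeas (a c : ℝ) : AEStronglyMeasurable (fun t : ℝ => t ^ a * (1+t) ^ c) (volume.restrict (Ioi (0:ℝ))) :=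
  ((measurable_id.pow_const _).mul ((measurable_const.add measurable_id).pow_const _)).aestronglyMeasurable

lemma myIntegrable {a c : ℝ} (ha : 0 < a) (hac : a < c) :
    IntegrableOn (fun t : ℝ => t ^ (a-1) * (1+t) ^ (-c)) (Ioi 0) := by
  have hc : 0 < c := ha.trans hac
  have h01 : IntegrableOn (fun t : ℝ => t ^ (a-1) * (1+t) ^ (-c)) (Ioc 0 1) := by
    have hbase : IntegrableOn (fun t : ℝ => t ^ (a-1)) (Ioc (0:ℝ) 1) := by
      have := intervalIntegral.intervalIntegrable_rpow' (a := 0) (b := 1) (r := a - 1) (by linarith)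
      simpa [intervalIntegrable_iff_integrableOn_Ioc_of_le (by norm_num : (0:ℝ) ≤ 1)] using this
    refine hbase.mono' ((myMeas _ _).mono_measure (Measure.restrict_mono Ioc_subset_Ioi_self le_rfl)) ?_
    filter_upwards [ae_restrict_mem measurableSet_Ioc] with t ht
    have ht0 : 0 < t := ht.1
    have h1 : (1+t) ^ (-c) ≤ 1 := rpow_le_one_of_one_le_of_nonpos (by linarith) (by linarith)
    have h2 : 0 ≤ t ^ (a-1) * (1+t) ^ (-c) := by positivity
    rw [Real.norm_eq_abs, abs_of_nonneg h2]
    calc t ^ (a-1) * (1+t) ^ (-c) ≤ t ^ (a-1) * 1 := by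
          exact mul_le_mul_of_nonneg_left h1 (by positivity)
      _ = t ^ (a-1) := mul_one _
  have h1i : IntegrableOn (fun t : ℝ => t ^ (a-1) * (1+t) ^ (-c)) (Ioi 1) := by
    have hbase : IntegrableOn (fun t : ℝ => t ^ (a-1-c)) (Ioi (1:ℝ)) :=
      integrableOn_Ioi_rpow_of_lt (by linarith) one_pos
    refine hbase.mono' ((myMeas _ _).mono_measure (Measure.restrict_mono (Ioi_subset_Ioi zero_le_one) le_rfl)) ?_
    filter_upwards [ae_restrict_mem measurableSet_Ioi] with t ht
    have ht0 : (0:ℝ) < t := lt_trans one_pos ht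
    have h2 : 0 ≤ t ^ (a-1) * (1+t) ^ (-c) := by positivity
    rw [Real.norm_eq_abs, abs_of_nonneg h2]
    have h1 : (1+t) ^ (-c) ≤ t ^ (-c) :=
      rpow_le_rpow_of_nonpos ht0 (by linarith) (by linarith)
    calc t ^ (a-1) * (1+t) ^ (-c) ≤ t ^ (a-1) * t ^ (-c) :=
          mul_le_mul_of_nonneg_left h1 (by positivity)
      _ = t ^ (a-1-c) := by rw [← rpow_add ht0]; ring_nf
  have := h01.union h1i
  rwa [Ioc_union_Ioi_eq_Ioi (zero_le_one)] at this

lemma myPos {a c : ℝ} (ha : 0 < a) (hac : a < c) :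
    0 < ∫ t in Ioi (0:ℝ), t ^ (a-1) * (1+t) ^ (-c) := by
  rw [setIntegral_pos_iff_support_of_nonneg_ae ?pos (myIntegrable ha hac)]
  case pos =>
    filter_upwards [ae_restrict_mem measurableSet_Ioi] with t ht
    have : (0:ℝ) < t := ht
    positivity
  · have hsub : Ioi (0:ℝ) ⊆ Function.support (fun t : ℝ => t ^ (a-1) * (1+t) ^ (-c)) ∩ Ioi 0 := by
      intro t ht
      have ht0 : (0:ℝ) < t := ht
      exact ⟨by simp only [Function.mem_support]; positivity, ht⟩
    calc (0:ENNReal) < volume (Ioi (0:ℝ)) := by simp [Real.volume_Ioi]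
      _ ≤ _ := measure_mono hsub
lemma myStep {a c : ℝ} (ha : 0 < a) (hac : a < c) :
    c * ∫ t in Ioi (0:ℝ), t ^ a * (1+t) ^ (-(c+1))
      = a * ∫ t in Ioi (0:ℝ), t ^ (a-1) * (1+t) ^ (-c) := by
  set f : ℝ → ℝ := fun t => t ^ a * (1+t) ^ (-c) with hf
  set f' : ℝ → ℝ := fun t => a * (t ^ (a-1) * (1+t) ^ (-c)) - c * (t ^ a * (1+t) ^ (-(c+1))) with hf'
  have hInt1 : IntegrableOn (fun t : ℝ => t ^ (a-1) * (1+t) ^ (-c)) (Ioi 0) := myIntegrable ha hac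
  have hInt2 : IntegrableOn (fun t : ℝ => t ^ a * (1+t) ^ (-(c+1))) (Ioi 0) := by
    have := myIntegrable (a := a+1) (c := c+1) (by linarith) (by linarith)
    simpa using this
  have hderiv : ∀ x ∈ Ioi (0:ℝ), HasDerivAt f (f' x) x := by
    intro x hx
    have hx0 : (0:ℝ) < x := hx
    have h1 : HasDerivAt (fun t : ℝ => t ^ a) (a * x ^ (a-1)) x :=
      Real.hasDerivAt_rpow_const (Or.inl hx0.ne')
    have h2 : HasDerivAt (fun t : ℝ => (1+t) ^ (-c)) (1 * (-c) * (1+x) ^ (-c-1)) x := by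
      have hb : HasDerivAt (fun t : ℝ => 1 + t) 1 x := (hasDerivAt_id x).const_add 1
      exact hb.rpow_const (Or.inl (by linarith))
    have := h1.mul h2
    convert this using 1
    · rfl
    · rfl
    · rfl
    simp only [hf']
    have e1 : (1+x) ^ (-(c+1)) = (1+x) ^ (-c-1) := by ring_nf
    rw [e1]; ring
  have hcont : ContinuousWithinAt f (Ici 0) 0 := by
    apply ContinuousWithinAt.mul
    · have : ContinuousAt (fun t : ℝ => t ^ a) 0 := by
        apply Real.continuousAt_rpow_const
        right; linarith
      exact this.continuousWithinAt
    · have : ContinuousAt (fun t : ℝ => (1+t) ^ (-c)) 0 := by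
        apply ContinuousAt.rpow_const
        · exact (continuous_const.add continuous_id).continuousAt
        · left; norm_num
      exact this.continuousWithinAt
  have htends : Tendsto f atTop (nhds 0) := by
    apply squeeze_zero' (g := fun t : ℝ => t ^ (a - c))
    · filter_upwards [eventually_gt_atTop (0:ℝ)] with t ht
      positivity
    · filter_upwards [eventually_gt_atTop (0:ℝ)] with t ht
      have h1 : (1+t) ^ (-c) ≤ t ^ (-c) :=
        rpow_le_rpow_of_nonpos ht (by linarith) (by linarith)
      calc f t ≤ t ^ a * t ^ (-c) := mul_le_mul_of_nonneg_left h1 (by positivity)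
        _ = t ^ (a - c) := by rw [← rpow_add ht]; ring_nf
    · have : Tendsto (fun t : ℝ => t ^ (-(c - a))) atTop (nhds 0) :=
        tendsto_rpow_neg_atTop (by linarith)
      simpa using this
  have hfint : IntegrableOn f' (Ioi 0) := ((hInt1.const_mul a).sub (hInt2.const_mul c))
  have key : ∫ x in Ioi (0:ℝ), f' x = 0 - f 0 :=
    integral_Ioi_of_hasDerivAt_of_tendsto hcont hderiv hfint htends
  have hf0 : f 0 = 0 := by
    simp only [hf]
    rw [Real.zero_rpow ha.ne']
    ring
  rw [hf0, sub_zero] at key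
  have hsplit : ∫ x in Ioi (0:ℝ), f' x
      = a * (∫ t in Ioi (0:ℝ), t ^ (a-1) * (1+t) ^ (-c))
        - c * (∫ t in Ioi (0:ℝ), t ^ a * (1+t) ^ (-(c+1))) := by
    simp only [hf']
    rw [integral_sub (hInt1.const_mul a) (hInt2.const_mul c), integral_const_mul, integral_const_mul]
  rw [hsplit] at key
  linarith
lemma mySubst {p m c : ℝ} (hp : 0 < p) :
    ∫ r in Ioi (0:ℝ), r ^ m * (1 + r ^ p) ^ (-c)
      = (1/p) * ∫ t in Ioi (0:ℝ), t ^ ((m+1)/p - 1) * (1+t) ^ (-c) := by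
  have key := integral_comp_rpow_Ioi_of_pos
    (g := fun t : ℝ => t ^ ((m+1)/p - 1) * (1+t) ^ (-c)) hp
  simp only [smul_eq_mul] at key
  have congr1 : ∫ x in Ioi (0:ℝ),
      p * x ^ (p-1) * ((x ^ p) ^ ((m+1)/p - 1) * (1 + x ^ p) ^ (-c))
      = ∫ x in Ioi (0:ℝ), p * (x ^ m * (1 + x ^ p) ^ (-c)) := by
    apply setIntegral_congr_fun measurableSet_Ioi
    intro x hx
    have hx0 : (0:ℝ) < x := hx
    have e1 : (x ^ p) ^ ((m+1)/p - 1) = x ^ (m + 1 - p) := by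
      rw [← Real.rpow_mul hx0.le]
      congr 1
      field_simp
    simp only []
    rw [e1]
    rw [show p * x ^ (p-1) * (x ^ (m+1-p) * (1 + x ^ p) ^ (-c))
        = p * ((x ^ (p-1) * x ^ (m+1-p)) * (1 + x ^ p) ^ (-c)) by ring]
    rw [← rpow_add hx0]
    ring_nf
  rw [congr1, integral_const_mul] at key
  rw [← key]
  field_simp
lemma myGrad {E : Type*} [NormedAddCommGroup E] [InnerProductSpace ℝ E] [CompleteSpace E]
    {s : ℝ} (hs0 : 0 < s) (hs2 : s < 2) {p : ℝ} (hp : 0 < p)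
    (Φ : E → ℝ) (hΦ : ∀ X, Φ X = (1 + ‖X‖ ^ (2 - s)) ^ (-p))
    {X : E} (hX : X ≠ 0) :
    ‖gradient Φ X‖ = ((2-s)*p) * ‖X‖ ^ (1-s) * (1 + ‖X‖ ^ (2-s)) ^ (-(p+1)) := by
  set q : ℝ := (2-s)/2 with hq
  have hq0 : 0 < q := by rw [hq]; linarith
  set F : ℝ → ℝ := fun u => (1 + u ^ q) ^ (-p) with hF
  have hΦF : Φ = fun Y : E => F (‖Y‖ ^ 2) := by
    funext Y
    rw [hΦ, hF]
    congr 2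
    rw [← Real.rpow_natCast ‖Y‖ 2, ← Real.rpow_mul (norm_nonneg Y)]
    norm_num [hq]
    ring_nf
  set u : ℝ := ‖X‖ ^ 2 with hu
  have hu0 : 0 < u := by
    have : 0 < ‖X‖ := norm_pos_iff.mpr hX
    positivity
  have huq : u ^ q = ‖X‖ ^ (2 - s) := by
    rw [hu, ← Real.rpow_natCast ‖X‖ 2, ← Real.rpow_mul (norm_nonneg X)]
    norm_num [hq]
    ring_nf
  have hbase : (0:ℝ) < 1 + u ^ q := by positivity
  have hFd : HasDerivAt F ((-p) * (1 + u ^ q) ^ (-p-1) * (q * u ^ (q-1))) u := by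
    have h1 : HasDerivAt (fun v : ℝ => 1 + v ^ q) (q * u ^ (q-1)) u :=
      (Real.hasDerivAt_rpow_const (Or.inl hu0.ne')).const_add 1
    have := h1.rpow_const (p := -p) (Or.inl hbase.ne')
    convert this using 1
    ring
  have hN : HasFDerivAt (fun Y : E => ‖Y‖ ^ 2) (2 • (innerSL ℝ X)) X :=
    (hasStrictFDerivAt_norm_sq X).hasFDerivAt
  have hFd2 : HasFDerivAt Φ
      (((-p) * (1 + u ^ q) ^ (-p-1) * (q * u ^ (q-1))) • (2 • (innerSL ℝ X))) X := by
    rw [hΦF]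
    exact hFd.comp_hasFDerivAt X hN
  set C : ℝ := 2 * ((-p) * (1 + u ^ q) ^ (-p-1) * (q * u ^ (q-1))) with hC
  have hGrad : HasGradientAt Φ (C • X) X := by
    rw [hasGradientAt_iff_hasFDerivAt]
    convert hFd2 using 1
    · rfl
    ext y
    simp only [toDual_apply_apply, ContinuousLinearMap.smul_apply, innerSL_apply_apply,
      inner_smul_left, RCLike.conj_to_real, hC]
    simp [smul_eq_mul]
    ring
  rw [hGrad.gradient]
  rw [norm_smul, Real.norm_eq_abs]
  have hCabs : |C| = 2 * p * (1 + u ^ q) ^ (-p-1) * (q * u ^ (q-1)) := by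
    rw [hC, abs_of_nonpos ?_, ]
    · ring
    · have h1 : (0:ℝ) ≤ (1 + u ^ q) ^ (-p-1) := by positivity
      have h2 : (0:ℝ) ≤ q * u ^ (q-1) := by positivity
      nlinarith [mul_nonneg (mul_nonneg hp.le h1) h2]
  rw [hCabs]
  have e1 : u ^ (q-1) * ‖X‖ = ‖X‖ ^ (1-s) := by
    rw [hu, ← Real.rpow_natCast ‖X‖ 2, ← Real.rpow_mul (norm_nonneg X)]
    nth_rewrite 2 [show ‖X‖ = ‖X‖ ^ (1:ℝ) from (Real.rpow_one _).symm]
    rw [← Real.rpow_add (norm_pos_iff.mpr hX)]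
    congr 1
    rw [hq]; ring
  rw [huq]
  calc 2 * p * (1 + ‖X‖ ^ (2-s)) ^ (-p-1) * (q * u ^ (q-1)) * ‖X‖
      = (2 * q * p) * (u ^ (q-1) * ‖X‖) * (1 + ‖X‖ ^ (2-s)) ^ (-p-1) := by ring
    _ = ((2-s)*p) * ‖X‖ ^ (1-s) * (1 + ‖X‖ ^ (2-s)) ^ (-(p+1)) := by
        rw [e1, show -p-1 = -(p+1) by ring, show 2*q = 2-s by rw [hq]; ring]

set_option maxHeartbeats 2000000 in
theorem stmt_4 (n : ℕ) (hn : 5 ≤ n) (s : ℝ) (hs : s ∈ Set.Ioo (0:ℝ) 2)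
    (Φ : EuclideanSpace ℝ (Fin n) → ℝ)
    (hΦ : ∀ X, Φ X = (1 + ‖X‖ ^ (2 - s)) ^ (-(((n:ℝ) - 2) / (2 - s)))) :
    (∫ X : EuclideanSpace ℝ (Fin n), ‖X‖ ^ 2 * ‖gradient Φ X‖ ^ 2)
      / (∫ X : EuclideanSpace ℝ (Fin n), (Φ X) ^ 2)
      = (n : ℝ) * ((n:ℝ) - 2) * ((n:ℝ) + 2 - s) / (2 * (2 * (n:ℝ) - 2 - s)) := by
  obtain ⟨hs0, hs2⟩ := hs
  have hts : (0:ℝ) < 2 - s := by linarith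
  have hn5 : (5:ℝ) ≤ (n:ℝ) := by exact_mod_cast hn
  haveI : Nontrivial (EuclideanSpace ℝ (Fin n)) := Module.nontrivial_of_finrank_pos (R := ℝ)
    (by rw [finrank_euclideanSpace_fin]; omega)
  set p : ℝ := ((n:ℝ) - 2) / (2 - s) with hpdef
  have hp : 0 < p := by apply div_pos <;> linarith
  set fN : ℝ → ℝ := fun r =>
    ((2-s)*p)^2 * (r ^ ((4:ℝ)-2*s) * (1 + r ^ (2-s)) ^ (-(2*p+2))) with hfN
  set fD : ℝ → ℝ := fun r => (1 + r ^ (2-s)) ^ (-(2*p)) with hfD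
  -- pointwise identities
  have hNum : ∀ X : EuclideanSpace ℝ (Fin n), ‖X‖ ^ 2 * ‖gradient Φ X‖ ^ 2 = fN ‖X‖ := by
    intro X
    by_cases hX : X = 0
    · rw [hX]
      simp only [norm_zero, hfN]
      rw [Real.zero_rpow (by linarith : (4:ℝ)-2*s ≠ 0)]
      norm_num
    · have hgr := myGrad hs0 hs2 hp Φ hΦ hX
      rw [hgr, hfN]
      beta_reduce
      have hr : (0:ℝ) < ‖X‖ := norm_pos_iff.mpr hX
      have hb : (0:ℝ) ≤ 1 + ‖X‖ ^ (2-s) := by positivity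
      rw [mul_pow, mul_pow]
      rw [← Real.rpow_natCast ‖X‖ 2, ← Real.rpow_natCast (‖X‖ ^ (1-s)) 2,
        ← Real.rpow_mul hr.le,
        ← Real.rpow_natCast ((1 + ‖X‖ ^ (2-s)) ^ (-(p+1))) 2,
        ← Real.rpow_mul hb]
      rw [show ((2:ℕ):ℝ) = (2:ℝ) from by norm_num]
      rw [show (1-s)*2 = 2-2*s from by ring, show (-(p+1))*2 = -(2*p+2) from by ring]
      rw [show (4:ℝ)-2*s = 2+(2-2*s) from by ring, Real.rpow_add hr]
      ring
  have hDen : ∀ X : EuclideanSpace ℝ (Fin n), (Φ X) ^ 2 = fD ‖X‖ := by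
    intro X
    rw [hΦ, hfD]
    have hb : (0:ℝ) ≤ 1 + ‖X‖ ^ (2-s) := by positivity
    rw [← Real.rpow_natCast ((1 + ‖X‖ ^ (2-s)) ^ (-p)) 2,
      ← Real.rpow_mul hb]
    congr 1
    rw [show ((2:ℕ):ℝ) = (2:ℝ) from by norm_num]
    ring
  -- reduce to radial integrals
  set V : ℝ := (volume (Metric.ball (0:EuclideanSpace ℝ (Fin n)) 1)).toReal with hV
  have hVpos : 0 < V :=
    ENNReal.toReal_pos (Metric.measure_ball_pos volume 0 one_pos).ne' measure_ball_lt_top.ne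
  have keyN : (∫ X : EuclideanSpace ℝ (Fin n), ‖X‖ ^ 2 * ‖gradient Φ X‖ ^ 2)
      = (n:ℝ) * V * ∫ y in Ioi (0:ℝ), y ^ (n-1 : ℕ) * fN y := by
    rw [integral_congr_ae (Filter.Eventually.of_forall hNum)]
    rw [integral_fun_norm_addHaar (volume : Measure (EuclideanSpace ℝ (Fin n))) fN]
    simp only [finrank_euclideanSpace_fin, nsmul_eq_mul, smul_eq_mul, measureReal_def, hV]
    ring
  have keyD : (∫ X : EuclideanSpace ℝ (Fin n), (Φ X) ^ 2)
      = (n:ℝ) * V * ∫ y in Ioi (0:ℝ), y ^ (n-1 : ℕ) * fD y := by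
    rw [integral_congr_ae (Filter.Eventually.of_forall hDen)]
    rw [integral_fun_norm_addHaar (volume : Measure (EuclideanSpace ℝ (Fin n))) fD]
    simp only [finrank_euclideanSpace_fin, nsmul_eq_mul, smul_eq_mul, measureReal_def, hV]
    ring
  -- beta-type parameters
  set a : ℝ := (n:ℝ) / (2 - s) with ha
  set cc : ℝ := 2 * p with hcc
  have ha0 : 0 < a := div_pos (by linarith) hts
  have hacc : a < cc := by
    have h2 : cc = (2*((n:ℝ)-2))/(2-s) := by rw [hcc, hpdef]; ring
    rw [ha, h2, div_lt_div_iff₀ hts hts]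
    nlinarith
  have hcc0 : 0 < cc := ha0.trans hacc
  -- radial reductions
  have hncast : (((n-1:ℕ)):ℝ) = (n:ℝ)-1 := by
    push_cast [Nat.cast_sub (by omega : 1 ≤ n)]; ring
  have hRN : ∫ y in Ioi (0:ℝ), y ^ (n-1:ℕ) * fN y
      = ((2-s)*p)^2 * ((1/(2-s)) * ∫ t in Ioi (0:ℝ), t ^ (a+1) * (1+t) ^ (-(cc+2))) := by
    have step1 : ∫ y in Ioi (0:ℝ), y ^ (n-1:ℕ) * fN y
        = ∫ y in Ioi (0:ℝ), ((2-s)*p)^2 * (y ^ ((n:ℝ)+3-2*s) * (1+y^(2-s)) ^ (-(2*p+2))) := by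
      apply setIntegral_congr_fun measurableSet_Ioi
      intro y hy
      have hy0 : (0:ℝ) < y := hy
      rw [hfN]; beta_reduce
      rw [← Real.rpow_natCast y (n-1), hncast]
      rw [show (n:ℝ)+3-2*s = ((n:ℝ)-1) + ((4:ℝ)-2*s) from by ring, Real.rpow_add hy0]
      ring
    rw [step1, integral_const_mul, mySubst hts]
    rw [show ((n:ℝ)+3-2*s+1)/(2-s) - 1 = a + 1 from by rw [ha]; field_simp; ring]
  have hRD : ∫ y in Ioi (0:ℝ), y ^ (n-1:ℕ) * fD y
      = (1/(2-s)) * ∫ t in Ioi (0:ℝ), t ^ (a-1) * (1+t) ^ (-cc) := by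
    have step1 : ∫ y in Ioi (0:ℝ), y ^ (n-1:ℕ) * fD y
        = ∫ y in Ioi (0:ℝ), y ^ ((n:ℝ)-1) * (1+y^(2-s)) ^ (-(2*p)) := by
      apply setIntegral_congr_fun measurableSet_Ioi
      intro y hy
      rw [hfD]; beta_reduce
      rw [← Real.rpow_natCast y (n-1), hncast]
    rw [step1, mySubst hts]
    rw [show ((n:ℝ)-1+1)/(2-s) - 1 = a - 1 from by rw [ha]; ring_nf]
  -- Beta recurrence
  have hJDpos : 0 < ∫ t in Ioi (0:ℝ), t ^ (a-1) * (1+t) ^ (-cc) := myPos ha0 hacc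
  set JD : ℝ := ∫ t in Ioi (0:ℝ), t ^ (a-1) * (1+t) ^ (-cc) with hJD
  set J1 : ℝ := ∫ t in Ioi (0:ℝ), t ^ a * (1+t) ^ (-(cc+1)) with hJ1
  set J2 : ℝ := ∫ t in Ioi (0:ℝ), t ^ (a+1) * (1+t) ^ (-(cc+2)) with hJ2
  have s1 : cc * J1 = a * JD := myStep ha0 hacc
  have s2 : (cc+1) * J2 = (a+1) * J1 := by
    have := myStep (a := a+1) (c := cc+1) (by linarith) (by linarith)
    simp only [add_sub_cancel_right] at this
    rw [show cc+1+1 = cc+2 from by ring] at this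
    exact this
  have hJ2eq : J2 = ((a+1)*a/((cc+1)*cc)) * JD := by
    have hcc1 : (0:ℝ) < cc + 1 := by linarith
    field_simp
    nlinarith [s1, s2]
  -- final computation
  rw [keyN, keyD, hRN, hRD, hJ2eq]
  have hD0 : (0:ℝ) < (n:ℝ) * V * ((1/(2-s)) * JD) := by
    have hn0 : (0:ℝ) < (n:ℝ) := by linarith
    have h1 : (0:ℝ) < 1/(2-s) := by positivity
    exact mul_pos (mul_pos hn0 hVpos) (mul_pos h1 hJDpos)
  rw [show (n:ℝ) * V * (((2-s)*p)^2 * ((1/(2-s)) * (((a+1)*a/((cc+1)*cc)) * JD)))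
      = (((2-s)*p)^2 * ((a+1)*a/((cc+1)*cc))) * ((n:ℝ) * V * ((1/(2-s)) * JD)) from by ring]
  rw [mul_div_assoc, div_self hD0.ne', mul_one]
  rw [ha, hcc, hpdef]
  have hne1 : (2:ℝ) - s ≠ 0 := hts.ne'
  have hne2 : (n:ℝ) - 2 ≠ 0 := by intro h; nlinarith
  have hne3 : 2*(n:ℝ)-2-s ≠ 0 := by intro h; nlinarith
  have hne4 : 2*(n:ℝ)-4+(2-s) ≠ 0 := by intro h; nlinarith
  have hne6 : 2*(n:ℝ)-4 ≠ 0 := by intro h; nlinarith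
  rw [show (2-s)*(((n:ℝ)-2)/(2-s)) = (n:ℝ)-2 from mul_div_cancel₀ _ hne1]
  rw [show (n:ℝ)/(2-s)+1 = ((n:ℝ)+2-s)/(2-s) from by field_simp; ring]
  rw [show 2*(((n:ℝ)-2)/(2-s))+1 = (2*(n:ℝ)-2-s)/(2-s) from by field_simp; ring]
  rw [show (2*(n:ℝ)-2-s)/(2-s) * (2*(((n:ℝ)-2)/(2-s))) = ((2*(n:ℝ)-2-s)*(2*(n:ℝ)-4))/((2-s)*(2-s)) from by rw [show 2*(((n:ℝ)-2)/(2-s)) = (2*(n:ℝ)-4)/(2-s) from by rw [← mul_div_assoc]; congr 1; ring, div_mul_div_comm]]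
  rw [div_mul_div_comm]
  rw [div_div_div_cancel_right₀ (mul_ne_zero hne1 hne1)]
  rw [← mul_div_assoc]
  rw [div_eq_div_iff (mul_ne_zero hne3 hne6) (mul_ne_zero two_ne_zero hne3)]
  ring
end

section
/- Let n ≥ 5 be an integer and s ∈ (0,2). With Φ(X) = (1 + |X|^{2-s})^{-(n-2)/(2-s)} and 2*(s) = 2(n-s)/(n-2), one has ∫_{ℝⁿ} |X|^{2-s} Φ^{2*(s)} dX / ∫_{ℝⁿ} Φ² dX = n(n-4) / (2(n-2)(2n-2-s)). -/
open MeasureTheory Set Real Filter Topology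

lemma h_cont {a b c : ℝ} : ContinuousOn (fun r : ℝ => r ^ (b - 1) * (1 + r ^ a) ^ (-c)) (Ioi 0) := by
  intro r hr
  have hr0 : (0:ℝ) < r := hr
  have h1 : (0:ℝ) < 1 + r ^ a := by nlinarith [rpow_pos_of_pos hr0 a]
  exact (((Real.continuousAt_rpow_const r (b-1) (Or.inl hr0.ne')).mul
    ((continuousAt_const.add (Real.continuousAt_rpow_const r a (Or.inl hr0.ne'))).rpow_const
      (Or.inl h1.ne')))).continuousWithinAt

lemma h_int {a b c : ℝ} (ha : 0 < a) (hb : 0 < b) (hbc : b < a * c) :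
    IntegrableOn (fun r : ℝ => r ^ (b - 1) * (1 + r ^ a) ^ (-c)) (Ioi 0) := by
  have hc : 0 < c := by nlinarith
  rw [← Ioc_union_Ioi_eq_Ioi (zero_le_one' ℝ), integrableOn_union]
  constructor
  · have hig : IntegrableOn (fun r : ℝ => r ^ (b - 1)) (Ioc 0 1) := by
      have := intervalIntegral.intervalIntegrable_rpow' (a := 0) (b := 1)
        (r := b - 1) (by linarith)
      rwa [intervalIntegrable_iff_integrableOn_Ioc_of_le zero_le_one] at this
    refine MeasureTheory.Integrable.mono hig ((h_cont (a := a) (b := b) (c := c)).mono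
        Ioc_subset_Ioi_self |>.aestronglyMeasurable measurableSet_Ioc)
      (Filter.eventually_of_mem (self_mem_ae_restrict measurableSet_Ioc) fun r hr => ?_)
    have hr0 : 0 < r := hr.1
    have h1 : (0:ℝ) ≤ r ^ (b - 1) := rpow_nonneg hr0.le _
    have h2 : (1 + r ^ a) ^ (-c) ≤ 1 :=
      rpow_le_one_of_one_le_of_nonpos (by nlinarith [rpow_nonneg hr0.le a]) (by linarith)
    have h3 : (0:ℝ) ≤ (1 + r ^ a) ^ (-c) := rpow_nonneg (by nlinarith [rpow_nonneg hr0.le a]) _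
    rw [Real.norm_eq_abs, Real.norm_eq_abs, abs_of_nonneg (mul_nonneg h1 h3),
      abs_of_nonneg h1]
    nlinarith
  · have hig : IntegrableOn (fun r : ℝ => r ^ (b - 1 - a * c)) (Ioi 1) :=
      integrableOn_Ioi_rpow_of_lt (by linarith) one_pos
    refine MeasureTheory.Integrable.mono hig ((h_cont (a := a) (b := b) (c := c)).mono
        (Ioi_subset_Ioi zero_le_one) |>.aestronglyMeasurable measurableSet_Ioi)
      (Filter.eventually_of_mem (self_mem_ae_restrict measurableSet_Ioi) fun r hr => ?_)
    have hr1 : (1:ℝ) < r := hr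
    have hr0 : (0:ℝ) < r := by linarith
    have h1 : (0:ℝ) ≤ r ^ (b - 1) := rpow_nonneg hr0.le _
    have hra : (0:ℝ) < r ^ a := rpow_pos_of_pos hr0 a
    have h2 : (1 + r ^ a) ^ (-c) ≤ (r ^ a) ^ (-c) :=
      rpow_le_rpow_of_nonpos hra (by linarith) (by linarith)
    have h3 : (0:ℝ) ≤ (1 + r ^ a) ^ (-c) := rpow_nonneg (by nlinarith) _
    rw [Real.norm_eq_abs, Real.norm_eq_abs, abs_of_nonneg (mul_nonneg h1 h3),
      abs_of_nonneg (rpow_nonneg hr0.le _)]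
    calc r ^ (b - 1) * (1 + r ^ a) ^ (-c) ≤ r ^ (b - 1) * (r ^ a) ^ (-c) := by nlinarith
      _ = r ^ (b - 1 - a * c) := by
          rw [← Real.rpow_mul hr0.le, ← Real.rpow_add hr0]; ring_nf

lemma h_ibp {a b c : ℝ} (ha : 0 < a) (hb : 0 < b) (hbc : b < a * c) :
    b * ∫ r in Ioi (0:ℝ), r ^ (b - 1) * (1 + r ^ a) ^ (-c)
      = (c * a) * ∫ r in Ioi (0:ℝ), r ^ (b + a - 1) * (1 + r ^ a) ^ (-(c + 1)) := by
  have hc : 0 < c := by nlinarith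
  have hba : 0 < b + a := by linarith
  have hbc' : b + a < a * (c + 1) := by nlinarith
  have hint1 := h_int ha hb hbc
  have hint2 := h_int ha hba hbc'
  set f : ℝ → ℝ := fun r => r ^ b * (1 + r ^ a) ^ (-c) with hf
  set f' : ℝ → ℝ := fun r =>
    b * (r ^ (b - 1) * (1 + r ^ a) ^ (-c))
      - (c * a) * (r ^ (b + a - 1) * (1 + r ^ a) ^ (-(c + 1))) with hf'
  have hderiv : ∀ x ∈ Ioi (0:ℝ), HasDerivAt f (f' x) x := by
    intro x hx
    have hx0 : (0:ℝ) < x := hx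
    have h1 : (0:ℝ) < 1 + x ^ a := by nlinarith [rpow_pos_of_pos hx0 a]
    have d1 : HasDerivAt (fun r : ℝ => r ^ b) (b * x ^ (b - 1)) x :=
      Real.hasDerivAt_rpow_const (Or.inl hx0.ne')
    have d2 : HasDerivAt (fun r : ℝ => 1 + r ^ a) (a * x ^ (a - 1)) x :=
      (Real.hasDerivAt_rpow_const (p := a) (Or.inl hx0.ne')).const_add 1
    have d3 : HasDerivAt (fun y : ℝ => y ^ (-c)) (-c * (1 + x ^ a) ^ (-c - 1)) (1 + x ^ a) :=
      Real.hasDerivAt_rpow_const (Or.inl h1.ne')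
    have d4 := (d3.comp x d2)
    have d5 := d1.mul d4
    refine d5.congr_deriv ?_
    have e1 : x ^ b * x ^ (a - 1) = x ^ (b + a - 1) := by
      rw [← Real.rpow_add hx0]; ring_nf
    have e2 : (1 + x ^ a) ^ (-(c + 1)) = (1 + x ^ a) ^ (-c - 1) := by ring_nf
    simp only [hf', Function.comp_def]
    rw [e2, ← e1]
    ring
  have hcont : ContinuousWithinAt f (Ici 0) 0 := by
    have h0 : (1:ℝ) + (0:ℝ) ^ a ≠ 0 := by rw [Real.zero_rpow ha.ne']; norm_num
    exact (((Real.continuousAt_rpow_const 0 b (Or.inr hb.le)).mul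
      ((continuousAt_const.add (Real.continuousAt_rpow_const 0 a (Or.inr ha.le))).rpow_const
        (Or.inl h0)))).continuousWithinAt
  have htend : Tendsto f atTop (𝓝 0) := by
    apply squeeze_zero' (Filter.eventually_of_mem (Filter.eventually_ge_atTop 1) ?_)
      (Filter.eventually_of_mem (Filter.eventually_ge_atTop 1) ?_)
      (tendsto_rpow_neg_atTop (show (0:ℝ) < a * c - b by linarith))
    · intro r hr
      have hr1 : (1:ℝ) ≤ r := hr
      have hr0 : (0:ℝ) < r := by linarith
      have h1 : (0:ℝ) < 1 + r ^ a := by nlinarith [rpow_pos_of_pos hr0 a]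
      exact mul_nonneg (rpow_nonneg hr0.le _) (rpow_nonneg h1.le _)
    · intro r hr
      have hr1 : (1:ℝ) ≤ r := hr
      have hr0 : (0:ℝ) < r := by linarith
      have hra : (0:ℝ) < r ^ a := rpow_pos_of_pos hr0 a
      have h2 : (1 + r ^ a) ^ (-c) ≤ (r ^ a) ^ (-c) :=
        rpow_le_rpow_of_nonpos hra (by linarith) (by linarith)
      have e : r ^ b * (r ^ a) ^ (-c) = r ^ (-(a * c - b)) := by
        rw [← Real.rpow_mul hr0.le, ← Real.rpow_add hr0]; ring_nf
      calc f r ≤ r ^ b * (r ^ a) ^ (-c) := by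
            exact mul_le_mul_of_nonneg_left h2 (rpow_nonneg hr0.le b)
        _ = r ^ (-(a * c - b)) := e
  have hint' : IntegrableOn f' (Ioi 0) := (hint1.const_mul b).sub (hint2.const_mul (c * a))
  have key := integral_Ioi_of_hasDerivAt_of_tendsto hcont hderiv hint' htend
  have hfz : f 0 = 0 := by
    simp only [hf, Real.zero_rpow hb.ne', zero_mul]
  rw [hfz, sub_zero] at key
  rw [hf'] at key
  rw [integral_sub (hint1.const_mul b) (hint2.const_mul (c * a)),
    integral_const_mul, integral_const_mul] at key
  linarith

lemma h_split {a b c : ℝ} (ha : 0 < a) (hb : 0 < b) (hbc : b < a * c) :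
    (∫ r in Ioi (0:ℝ), r ^ (b - 1) * (1 + r ^ a) ^ (-c))
      = (∫ r in Ioi (0:ℝ), r ^ (b - 1) * (1 + r ^ a) ^ (-(c + 1)))
        + ∫ r in Ioi (0:ℝ), r ^ (b + a - 1) * (1 + r ^ a) ^ (-(c + 1)) := by
  have hc : 0 < c := by nlinarith
  rw [← integral_add (h_int ha hb (by nlinarith)) (h_int ha (by linarith) (by nlinarith))]
  refine setIntegral_congr_fun measurableSet_Ioi fun r hr => ?_
  have hr0 : (0:ℝ) < r := hr
  have h1 : (0:ℝ) < 1 + r ^ a := by nlinarith [rpow_pos_of_pos hr0 a]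
  have e1 : r ^ (b + a - 1) = r ^ (b - 1) * r ^ a := by
    rw [← Real.rpow_add hr0]; ring_nf
  have e2 : (1 + r ^ a) ^ (-c) = (1 + r ^ a) ^ (-(c + 1)) * (1 + r ^ a) := by
    nth_rewrite 3 [← Real.rpow_one (1 + r ^ a)]
    rw [← Real.rpow_add h1]
    norm_num
  rw [e1, e2]
  ring

lemma h_pos {a b c : ℝ} (ha : 0 < a) (hb : 0 < b) (hbc : b < a * c) :
    0 < ∫ r in Ioi (0:ℝ), r ^ (b - 1) * (1 + r ^ a) ^ (-c) := by
  rw [setIntegral_pos_iff_support_of_nonneg_ae ?_ (h_int ha hb hbc)]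
  · have hsub : Ioi (0:ℝ) ⊆
        (Function.support fun r : ℝ => r ^ (b - 1) * (1 + r ^ a) ^ (-c)) ∩ Ioi 0 := by
      intro r hr
      have hr0 : (0:ℝ) < r := hr
      have h1 : (0:ℝ) < 1 + r ^ a := by nlinarith [rpow_pos_of_pos hr0 a]
      refine ⟨?_, hr⟩
      simp only [Function.mem_support]
      positivity
    calc (0:ENNReal) < volume (Ioi (0:ℝ)) := by rw [Real.volume_Ioi]; exact ENNReal.zero_lt_top
      _ ≤ _ := measure_mono hsub
  · refine Filter.eventually_of_mem (self_mem_ae_restrict measurableSet_Ioi) fun r hr => ?_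
    have hr0 : (0:ℝ) < r := hr
    have h1 : (0:ℝ) < 1 + r ^ a := by nlinarith [rpow_pos_of_pos hr0 a]
    positivity

theorem stmt_5 (n : ℕ) (hn : 5 ≤ n) (s : ℝ) (hs : s ∈ Set.Ioo (0:ℝ) 2)
    (Φ : EuclideanSpace ℝ (Fin n) → ℝ)
    (hΦ : ∀ X, Φ X = (1 + ‖X‖ ^ (2 - s)) ^ (-(((n:ℝ) - 2) / (2 - s)))) :
    (∫ X : EuclideanSpace ℝ (Fin n), ‖X‖ ^ (2 - s) * (Φ X) ^ (2 * ((n:ℝ) - s) / ((n:ℝ) - 2)))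
      / (∫ X : EuclideanSpace ℝ (Fin n), (Φ X) ^ 2)
      = (n : ℝ) * ((n:ℝ) - 4) / (2 * ((n:ℝ) - 2) * (2 * (n:ℝ) - 2 - s)) := by
  obtain ⟨hs0, hs2⟩ := hs
  have ha : (0:ℝ) < 2 - s := by linarith
  have hn5 : (5:ℝ) ≤ (n:ℝ) := by exact_mod_cast hn
  haveI : Nonempty (Fin n) := ⟨⟨0, by omega⟩⟩
  set c₁ : ℝ := 2 * ((n:ℝ) - 2) / (2 - s) with hc₁
  have e1 : c₁ * (2 - s) = 2 * (n:ℝ) - 4 := by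
    rw [hc₁]; field_simp; ring
  have e2 : (c₁ + 1) * (2 - s) = 2 * (n:ℝ) - 2 - s := by
    rw [hc₁]; field_simp; ring
  -- basic inequalities
  have hb1 : (0:ℝ) < (n:ℝ) := by linarith
  have hbc1 : (n:ℝ) < (2 - s) * c₁ := by nlinarith [e1]
  have hbc2 : (n:ℝ) < (2 - s) * (c₁ + 1) := by nlinarith [e2]
  have hbN : (0:ℝ) < (n:ℝ) + (2 - s) := by linarith
  -- polar coordinates
  have hpolar : ∀ g : ℝ → ℝ, (∫ X : EuclideanSpace ℝ (Fin n), g ‖X‖)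
      = ((n:ℝ) * (volume (Metric.ball (0:EuclideanSpace ℝ (Fin n)) 1)).toReal)
        * ∫ y in Ioi (0:ℝ), (y : ℝ) ^ (n - 1) * g y := by
    intro g
    rw [MeasureTheory.integral_fun_norm_addHaar (volume : Measure (EuclideanSpace ℝ (Fin n))) g]
    simp only [finrank_euclideanSpace_fin, nsmul_eq_mul, smul_eq_mul, measureReal_def]
    ring
  set K : ℝ := (volume (Metric.ball (0:EuclideanSpace ℝ (Fin n)) 1)).toReal with hK
  have hKpos : 0 < K := ENNReal.toReal_pos (Metric.measure_ball_pos volume 0 one_pos).ne'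
    measure_ball_lt_top.ne
  -- rewrite numerator
  have hnum : (∫ X : EuclideanSpace ℝ (Fin n), ‖X‖ ^ (2 - s) * (Φ X) ^ (2 * ((n:ℝ) - s) / ((n:ℝ) - 2)))
      = ((n:ℝ) * K) * ∫ r in Ioi (0:ℝ),
          r ^ ((n:ℝ) + (2 - s) - 1) * (1 + r ^ (2 - s)) ^ (-(c₁ + 1 + 1)) := by
    have hptwise : ∀ X : EuclideanSpace ℝ (Fin n),
        ‖X‖ ^ (2 - s) * (Φ X) ^ (2 * ((n:ℝ) - s) / ((n:ℝ) - 2))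
        = (fun r : ℝ => r ^ (2 - s) * (1 + r ^ (2 - s)) ^ (-(c₁ + 1 + 1))) ‖X‖ := by
      intro X
      have ht : (0:ℝ) ≤ 1 + ‖X‖ ^ (2 - s) := by positivity
      have hn2 : (n:ℝ) - 2 ≠ 0 := by linarith
      have hexp : -(((n:ℝ) - 2) / (2 - s)) * (2 * ((n:ℝ) - s) / ((n:ℝ) - 2))
          = -(c₁ + 1 + 1) := by
        rw [hc₁]; field_simp; ring
      rw [hΦ X, ← Real.rpow_mul ht, hexp]
    simp only [hptwise]
    refine (hpolar (fun r : ℝ => r ^ (2 - s) * (1 + r ^ (2 - s)) ^ (-(c₁ + 1 + 1)))).trans ?_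
    congr 1
    refine setIntegral_congr_fun measurableSet_Ioi fun y hy => ?_
    have hy0 : (0:ℝ) < y := hy
    have hcast : ((n - 1 : ℕ) : ℝ) = (n:ℝ) - 1 := by
      push_cast [Nat.cast_sub (by omega : 1 ≤ n)]; ring
    rw [← Real.rpow_natCast y (n - 1), hcast, ← mul_assoc, ← Real.rpow_add hy0]
    ring_nf
  -- rewrite denominator
  have hden : (∫ X : EuclideanSpace ℝ (Fin n), (Φ X) ^ 2)
      = ((n:ℝ) * K) * ∫ r in Ioi (0:ℝ),
          r ^ ((n:ℝ) - 1) * (1 + r ^ (2 - s)) ^ (-c₁) := by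
    have hptwise : ∀ X : EuclideanSpace ℝ (Fin n),
        (Φ X) ^ 2 = (fun r : ℝ => (1 + r ^ (2 - s)) ^ (-c₁)) ‖X‖ := by
      intro X
      have ht : (0:ℝ) < 1 + ‖X‖ ^ (2 - s) := by positivity
      have hexp : -(((n:ℝ) - 2) / (2 - s)) + -(((n:ℝ) - 2) / (2 - s)) = -c₁ := by
        rw [hc₁]; field_simp; ring
      rw [hΦ X, sq, ← Real.rpow_add ht, hexp]
    simp only [hptwise]
    refine (hpolar (fun r : ℝ => (1 + r ^ (2 - s)) ^ (-c₁))).trans ?_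
    congr 1
    refine setIntegral_congr_fun measurableSet_Ioi fun y hy => ?_
    have hy0 : (0:ℝ) < y := hy
    have hcast : ((n - 1 : ℕ) : ℝ) = (n:ℝ) - 1 := by
      push_cast [Nat.cast_sub (by omega : 1 ≤ n)]; ring
    rw [← Real.rpow_natCast y (n - 1), hcast]
  -- the four radial integrals and their relations
  set A := ∫ r in Ioi (0:ℝ), r ^ ((n:ℝ) - 1) * (1 + r ^ (2 - s)) ^ (-c₁) with hA
  set B := ∫ r in Ioi (0:ℝ), r ^ ((n:ℝ) - 1) * (1 + r ^ (2 - s)) ^ (-(c₁ + 1)) with hB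
  set Cc := ∫ r in Ioi (0:ℝ), r ^ ((n:ℝ) + (2 - s) - 1) * (1 + r ^ (2 - s)) ^ (-(c₁ + 1)) with hCc
  set N := ∫ r in Ioi (0:ℝ), r ^ ((n:ℝ) + (2 - s) - 1) * (1 + r ^ (2 - s)) ^ (-(c₁ + 1 + 1)) with hN
  have ibp1 : (n:ℝ) * A = (c₁ * (2 - s)) * Cc :=
    h_ibp ha hb1 (by linarith [hbc1])
  have hsp : A = B + Cc := h_split ha hb1 (by linarith [hbc1])
  have ibp2 : (n:ℝ) * B = ((c₁ + 1) * (2 - s)) * N :=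
    h_ibp ha hb1 (by linarith [hbc2])
  have hApos : 0 < A := h_pos ha hb1 (by linarith [hbc1])
  rw [hnum, hden]
  rw [mul_div_mul_left _ _ (by positivity : (n:ℝ) * K ≠ 0)]
  rw [e1] at ibp1
  rw [e2] at ibp2
  rw [div_eq_div_iff hApos.ne' (by nlinarith : (0:ℝ) < 2 * ((n:ℝ) - 2) * (2 * (n:ℝ) - 2 - s)).ne']
  linear_combination ((n:ℝ)) * ibp1 + (-((n:ℝ) * (2 * (n:ℝ) - 4))) * hsp + (-(2 * (n:ℝ) - 4)) * ibp2
end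

section
/- Let n ≥ 3 be an integer and s ∈ (0,2). With Φ(X) = (1 + |X|^{2-s})^{-(n-2)/(2-s)} and 2*(s) = 2(n-s)/(n-2), one has ∫_{ℝⁿ} |∇Φ|² dX = (n-2)(n-s) ∫_{ℝⁿ} |X|^{-s} Φ^{2*(s)} dX. -/
open MeasureTheory Set Real


lemma aux_integ (s p b : ℝ) (hs2 : s < 2) (hp : -1 < p) (hb : 0 ≤ b)
    (hpb : p - (2-s)*b < -1) :
    IntegrableOn (fun y : ℝ => y ^ p * (1 + y ^ (2-s)) ^ (-b)) (Ioi (0:ℝ)) := by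
  have hmeas : Measurable fun y : ℝ => y ^ p * (1 + y ^ (2-s)) ^ (-b) := by
    measurability
  have h1 : IntegrableOn (fun y : ℝ => y ^ p * (1 + y ^ (2-s)) ^ (-b)) (Ioc (0:ℝ) 1) := by
    have hg : IntegrableOn (fun y : ℝ => y ^ p) (Ioc (0:ℝ) 1) := by
      have := intervalIntegral.intervalIntegrable_rpow' (r := p) (a := 0) (b := 1) hp
      rwa [intervalIntegrable_iff_integrableOn_Ioc_of_le zero_le_one] at this
    refine hg.mono' hmeas.aestronglyMeasurable.restrict ?_
    filter_upwards [ae_restrict_mem measurableSet_Ioc] with y hy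
    have hy0 : (0:ℝ) < y := hy.1
    have h1u : (1:ℝ) ≤ 1 + y ^ (2-s) := by
      have : (0:ℝ) ≤ y ^ (2-s) := rpow_nonneg hy0.le _
      linarith
    have hle : (1 + y ^ (2-s)) ^ (-b) ≤ 1 :=
      rpow_le_one_of_one_le_of_nonpos h1u (by linarith)
    rw [Real.norm_eq_abs, abs_of_nonneg (by positivity)]
    calc y ^ p * (1 + y ^ (2-s)) ^ (-b) ≤ y ^ p * 1 := by
          exact mul_le_mul_of_nonneg_left hle (rpow_nonneg hy0.le _)
      _ = y ^ p := mul_one _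
  have h2 : IntegrableOn (fun y : ℝ => y ^ p * (1 + y ^ (2-s)) ^ (-b)) (Ioi (1:ℝ)) := by
    have hg : IntegrableOn (fun y : ℝ => y ^ (p - (2-s)*b)) (Ioi (1:ℝ)) :=
      (integrableOn_Ioi_rpow_iff zero_lt_one).2 hpb
    refine hg.mono' hmeas.aestronglyMeasurable.restrict ?_
    filter_upwards [ae_restrict_mem measurableSet_Ioi] with y hy
    have hy1 : (1:ℝ) < y := hy
    have hy0 : (0:ℝ) < y := lt_trans zero_lt_one hy1
    have hu : (0:ℝ) < y ^ (2-s) := rpow_pos_of_pos hy0 _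
    have hle : (1 + y ^ (2-s)) ^ (-b) ≤ (y ^ (2-s)) ^ (-b) :=
      rpow_le_rpow_of_nonpos hu (by linarith) (by linarith)
    have he : (y ^ (2-s)) ^ (-b) = y ^ (-((2-s)*b)) := by
      rw [← Real.rpow_mul hy0.le]; ring_nf
    rw [Real.norm_eq_abs, abs_of_nonneg (by positivity)]
    calc y ^ p * (1 + y ^ (2-s)) ^ (-b) ≤ y ^ p * y ^ (-((2-s)*b)) := by
          rw [← he]; exact mul_le_mul_of_nonneg_left hle (rpow_nonneg hy0.le _)
      _ = y ^ (p - (2-s)*b) := by rw [← Real.rpow_add hy0]; ring_nf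
  have := h1.union h2
  rwa [Ioc_union_Ioi_eq_Ioi zero_le_one] at this

lemma aux_ibp (s a : ℝ) (hs0 : 0 < s) (hs2 : s < 2) (ha : 3 ≤ a) :
    (a-2) * (∫ y in Ioi (0:ℝ), y ^ (a-1-s) * (1 + y ^ (2-s)) ^ (-(2*(a-s)/(2-s) - 1)))
      = (2*a-2-s) * ∫ y in Ioi (0:ℝ), y ^ (a-1-s) * (1 + y ^ (2-s)) ^ (-(2*(a-s)/(2-s))) := by
  have h2s : (0:ℝ) < 2 - s := by linarith
  set α : ℝ := 2*(a-s)/(2-s) with hα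
  have hca : (2-s) * α = 2*(a-s) := by rw [hα]; field_simp
  have hca1 : (2-s) * (α-1) = 2*a-s-2 := by rw [mul_sub, hca]; ring
  have hα1 : 0 < α - 1 := by nlinarith [hca1]
  have hint1 : IntegrableOn (fun y : ℝ => y ^ (a-1-s) * (1 + y ^ (2-s)) ^ (-(α-1)))
      (Ioi (0:ℝ)) :=
    aux_integ s _ _ hs2 (by linarith) (by linarith) (by nlinarith [hca1])
  have hint2 : IntegrableOn (fun y : ℝ => y ^ (a-1-s) * (1 + y ^ (2-s)) ^ (-α))
      (Ioi (0:ℝ)) :=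
    aux_integ s _ _ hs2 (by linarith) (by linarith) (by nlinarith [hca])
  set H : ℝ → ℝ := fun y => y ^ (a-s) * (1 + y ^ (2-s)) ^ (-(α-1)) with hH
  set g : ℝ → ℝ := fun y => -(a-2) * (y ^ (a-1-s) * (1 + y ^ (2-s)) ^ (-(α-1)))
      + (2*a-2-s) * (y ^ (a-1-s) * (1 + y ^ (2-s)) ^ (-α)) with hg
  have hderiv : ∀ y ∈ Ioi (0:ℝ), HasDerivAt H (g y) y := by
    intro y hy
    have hy0 : (0:ℝ) < y := hy
    have hu : (0:ℝ) < y ^ (2-s) := rpow_pos_of_pos hy0 _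
    have hv : (0:ℝ) < 1 + y ^ (2-s) := by linarith
    have h1 : HasDerivAt (fun y : ℝ => y ^ (a-s)) ((a-s) * y ^ (a-s-1)) y :=
      Real.hasDerivAt_rpow_const (Or.inl hy0.ne')
    have h2 : HasDerivAt (fun y : ℝ => (1 + y ^ (2-s)) ^ (-(α-1)))
        ((-(α-1)) * (1 + y ^ (2-s)) ^ (-(α-1)-1) * ((2-s) * y ^ (2-s-1))) y := by
      have hi : HasDerivAt (fun y : ℝ => 1 + y ^ (2-s)) ((2-s) * y ^ (2-s-1)) y :=
        (Real.hasDerivAt_rpow_const (Or.inl hy0.ne')).const_add 1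
      convert hi.rpow_const (Or.inl hv.ne') using 1
      ring
    have hmul := h1.mul h2
    convert hmul using 1
    case e'_4 => rfl
    case e'_5 => rfl
    case e'_8 => rfl
    have e1 : y ^ (a-s-1) = y ^ (a-1-s) := by ring_nf
    have e2 : (1 + y ^ (2-s)) ^ (-(α-1)-1) = (1 + y ^ (2-s)) ^ (-α) := by ring_nf
    have e3 : y ^ (a-s) * y ^ (2-s-1) = y ^ (a-1-s) * y ^ (2-s) := by
      rw [← Real.rpow_add hy0, ← Real.rpow_add hy0]; ring_nf
    have e4 : y ^ (2-s) * (1 + y ^ (2-s)) ^ (-α)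
        = (1 + y ^ (2-s)) ^ (-(α-1)) - (1 + y ^ (2-s)) ^ (-α) := by
      have h5 : (1 + y ^ (2-s)) ^ (-(α-1)) = (1 + y ^ (2-s)) * (1 + y ^ (2-s)) ^ (-α) := by
        rw [show -(α-1) = 1 + (-α) by ring, Real.rpow_add hv, Real.rpow_one]
      rw [h5]; ring
    rw [hg, e1, e2]
    linear_combination ((α-1)*(2-s)*((1 + y ^ (2-s)) ^ (-α))) * e3
      + ((α-1)*(2-s)*(y ^ (a-1-s))) * e4
      + ((y ^ (a-1-s))*((1 + y ^ (2-s)) ^ (-(α-1)) - (1 + y ^ (2-s)) ^ (-α))) * hca1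
  have hint_g : IntegrableOn g (Ioi (0:ℝ)) :=
    (hint1.const_mul _).add (hint2.const_mul _)
  have hcont : ContinuousWithinAt H (Ici (0:ℝ)) 0 := by
    apply ContinuousAt.continuousWithinAt
    have c1 : ContinuousAt (fun y : ℝ => y ^ (a-s)) 0 :=
      Real.continuousAt_rpow_const _ _ (Or.inr (by linarith))
    have ci : ContinuousAt (fun y : ℝ => 1 + y ^ (2-s)) 0 := by
      exact (continuousAt_const.add (Real.continuousAt_rpow_const _ _ (Or.inr (by linarith))))
    have c2 : ContinuousAt (fun y : ℝ => (1 + y ^ (2-s)) ^ (-(α-1))) 0 := by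
      refine ci.rpow_const (Or.inl ?_)
      norm_num [Real.zero_rpow (by linarith : (2:ℝ)-s ≠ 0)]
    exact c1.mul c2
  have htends : Filter.Tendsto H Filter.atTop (nhds 0) := by
    have hev : ∀ᶠ y in Filter.atTop,
        H y = (1 + y ^ (-(2-s))) ^ (-(α-1)) * y ^ (-(a-2)) := by
      filter_upwards [Filter.eventually_gt_atTop 0] with y hy0
      have hu : (0:ℝ) < y ^ (2-s) := rpow_pos_of_pos hy0 _
      have hone : y ^ (2-s) * y ^ (-(2-s)) = 1 := by
        rw [← Real.rpow_add hy0]; norm_num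
      have key : (1:ℝ) + y ^ (2-s) = y ^ (2-s) * (1 + y ^ (-(2-s))) := by
        linear_combination -hone
      rw [hH]
      dsimp only
      rw [key, Real.mul_rpow hu.le (by positivity), ← Real.rpow_mul hy0.le,
        show (2-s) * (-(α-1)) = -(2*a-s-2) by linear_combination -hca1,
        show y ^ (a - s) * (y ^ (-(2*a-s-2)) * (1 + y ^ (-(2-s))) ^ (-(α-1)))
          = (y ^ (a - s) * y ^ (-(2*a-s-2))) * (1 + y ^ (-(2-s))) ^ (-(α-1)) by ring,
        ← Real.rpow_add hy0, show a - s + -(2*a-s-2) = -(a-2) by ring]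
      ring
    have l1 : Filter.Tendsto (fun y : ℝ => (1 + y ^ (-(2-s))) ^ (-(α-1))) Filter.atTop (nhds 1) := by
      have hb : Filter.Tendsto (fun y : ℝ => 1 + y ^ (-(2-s))) Filter.atTop (nhds 1) := by
        simpa using (tendsto_const_nhds (x := (1:ℝ))).add (tendsto_rpow_neg_atTop h2s)
      have hc : ContinuousAt (fun t : ℝ => t ^ (-(α-1))) 1 :=
        Real.continuousAt_rpow_const _ _ (Or.inl one_ne_zero)
      simpa [Function.comp_def] using hc.tendsto.comp hb
    have l2 : Filter.Tendsto (fun y : ℝ => y ^ (-(a-2))) Filter.atTop (nhds 0) :=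
      tendsto_rpow_neg_atTop (by linarith)
    have := l1.mul l2
    rw [mul_zero] at this
    refine Filter.Tendsto.congr' ?_ this
    filter_upwards [hev] with y h
    exact h.symm
  have h0 : H 0 = 0 := by
    rw [hH]; dsimp only
    rw [Real.zero_rpow (by linarith : a - s ≠ 0), zero_mul]
  have key := integral_Ioi_of_hasDerivAt_of_tendsto hcont hderiv hint_g htends
  rw [h0, sub_zero] at key
  have hsplit : (∫ y in Ioi (0:ℝ), g y)
      = -(a-2) * (∫ y in Ioi (0:ℝ), y ^ (a-1-s) * (1 + y ^ (2-s)) ^ (-(α-1)))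
        + (2*a-2-s) * ∫ y in Ioi (0:ℝ), y ^ (a-1-s) * (1 + y ^ (2-s)) ^ (-α) := by
    rw [hg]
    rw [integral_add (hint1.const_mul _) (hint2.const_mul _), integral_const_mul, integral_const_mul]
  rw [hsplit] at key
  linarith [key]

lemma aux_grad (n : ℕ) (hn : 3 ≤ n) (s : ℝ) (hs0 : 0 < s) (hs2 : s < 2)
    (Φ : EuclideanSpace ℝ (Fin n) → ℝ)
    (hΦ : ∀ X, Φ X = (1 + ‖X‖ ^ (2 - s)) ^ (-(((n:ℝ) - 2) / (2 - s))))
    (x : EuclideanSpace ℝ (Fin n)) (hx : x ≠ 0) :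
    ‖gradient Φ x‖
      = ((n:ℝ)-2) * ‖x‖ ^ (1-s) * (1 + ‖x‖ ^ (2-s)) ^ (-(((n:ℝ)-s)/(2-s))) := by
  have ha : (3:ℝ) ≤ (n:ℝ) := by exact_mod_cast hn
  have h2s : (0:ℝ) < 2 - s := by linarith
  set a : ℝ := (n:ℝ) with haa
  set β : ℝ := (a-2)/(2-s) with hβ
  set c : ℝ := (2-s)/2 with hc
  have hβ0 : 0 < β := by rw [hβ]; apply div_pos <;> linarith
  have hc0 : 0 < c := by rw [hc]; positivity
  have hr : (0:ℝ) < ‖x‖ := norm_pos_iff.2 hx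
  set t : ℝ := ‖x‖^2 with htdef
  have ht : (0:ℝ) < t := by rw [htdef]; positivity
  have htc : t ^ c = ‖x‖ ^ (2-s) := by
    rw [htdef, ← Real.rpow_natCast ‖x‖ 2, ← Real.rpow_mul (norm_nonneg x)]
    congr 1
    rw [hc]; push_cast; ring
  have hv : (0:ℝ) < 1 + t ^ c := by
    have := rpow_pos_of_pos ht c; linarith
  -- derivative of the radial profile
  have hq : HasDerivAt (fun t : ℝ => (1 + t ^ c) ^ (-β))
      ((-β) * (1 + t ^ c) ^ (-β-1) * (c * t ^ (c-1))) t := by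
    have hi : HasDerivAt (fun t : ℝ => 1 + t ^ c) (c * t ^ (c-1)) t :=
      (Real.hasDerivAt_rpow_const (Or.inl ht.ne')).const_add 1
    convert hi.rpow_const (Or.inl hv.ne') using 1
    ring
  have hsq : HasFDerivAt (fun X : EuclideanSpace ℝ (Fin n) => ‖X‖^2)
      ((2:ℕ) • (innerSL ℝ x)) x :=
    (hasStrictFDerivAt_norm_sq x).hasFDerivAt
  have hcomp := hq.comp_hasFDerivAt x hsq
  have hfun : Φ = (fun t : ℝ => (1 + t ^ c) ^ (-β)) ∘ (fun X : EuclideanSpace ℝ (Fin n) => ‖X‖^2) := by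
    funext X
    simp only [Function.comp_apply]
    rw [hΦ X]
    congr 2
    rw [← Real.rpow_natCast ‖X‖ 2, ← Real.rpow_mul (norm_nonneg X)]
    congr 1
    rw [hc]; push_cast; ring
  rw [← hfun] at hcomp
  have hnorm : ‖gradient Φ x‖ = ‖fderiv ℝ Φ x‖ := by
    show ‖(InnerProductSpace.toDual ℝ (EuclideanSpace ℝ (Fin n))).symm (fderiv ℝ Φ x)‖ = _
    rw [LinearIsometryEquiv.norm_map]
  rw [hnorm, hcomp.fderiv]
  rw [norm_smul, ← Nat.cast_smul_eq_nsmul ℝ 2 (innerSL ℝ x), norm_smul, innerSL_apply_norm]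
  have htc1 : t ^ (c-1) = ‖x‖ ^ (-s) := by
    rw [htdef, ← Real.rpow_natCast ‖x‖ 2, ← Real.rpow_mul (norm_nonneg x)]
    congr 1
    rw [hc]; ring
  rw [htc, htc1]
  have habs1 : ‖(-β) * (1 + ‖x‖ ^ (2-s)) ^ (-β-1) * (c * ‖x‖ ^ (-s))‖
      = β * (1 + ‖x‖ ^ (2-s)) ^ (-β-1) * (c * ‖x‖ ^ (-s)) := by
    have h1 : (0:ℝ) ≤ (1 + ‖x‖ ^ (2-s)) ^ (-β-1) := by positivity
    have h2 : (0:ℝ) ≤ c * ‖x‖ ^ (-s) := by positivity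
    have hnp : (-β) * (1 + ‖x‖ ^ (2-s)) ^ (-β-1) * (c * ‖x‖ ^ (-s)) ≤ 0 := by
      nlinarith [mul_nonneg (mul_nonneg hβ0.le h1) h2]
    rw [Real.norm_eq_abs, abs_of_nonpos hnp]
    ring
  rw [habs1]
  have h2n : ‖((2:ℕ):ℝ)‖ = 2 := by norm_num
  rw [h2n]
  have hexp : -β-1 = -((a-s)/(2-s)) := by
    rw [hβ]; field_simp; ring
  rw [hexp]
  have hrs : ‖x‖ ^ (-s) * ‖x‖ = ‖x‖ ^ (1-s) := by
    nth_rewrite 2 [← Real.rpow_one ‖x‖]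
    rw [← Real.rpow_add hr]; ring_nf
  have hcoef : β * c * 2 = a - 2 := by rw [hβ, hc]; field_simp
  calc β * (1 + ‖x‖ ^ (2-s)) ^ (-((a-s)/(2-s))) * (c * ‖x‖ ^ (-s)) * (2 * ‖x‖)
      = (β * c * 2) * (‖x‖ ^ (-s) * ‖x‖) * (1 + ‖x‖ ^ (2-s)) ^ (-((a-s)/(2-s))) := by
        push_cast; ring
    _ = (a-2) * ‖x‖ ^ (1-s) * (1 + ‖x‖ ^ (2-s)) ^ (-((a-s)/(2-s))) := by
        rw [hcoef, hrs]

lemma sq_rpow (x e : ℝ) (hx : 0 ≤ x) : (x ^ e) ^ (2:ℕ) = x ^ (e*2) := by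
  rw [← Real.rpow_natCast (x ^ e) 2, ← Real.rpow_mul hx]
  norm_num

theorem stmt_6 (n : ℕ) (hn : 3 ≤ n) (s : ℝ) (hs : s ∈ Set.Ioo (0:ℝ) 2)
    (Φ : EuclideanSpace ℝ (Fin n) → ℝ)
    (hΦ : ∀ X, Φ X = (1 + ‖X‖ ^ (2 - s)) ^ (-(((n:ℝ) - 2) / (2 - s)))) :
    (∫ X : EuclideanSpace ℝ (Fin n), ‖gradient Φ X‖ ^ 2)
      = ((n:ℝ) - 2) * ((n:ℝ) - s)
        * ∫ X : EuclideanSpace ℝ (Fin n),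
            ‖X‖ ^ (-s) * (Φ X) ^ (2 * ((n:ℝ) - s) / ((n:ℝ) - 2)) := by
  obtain ⟨hs0, hs2⟩ := hs
  have ha : (3:ℝ) ≤ (n:ℝ) := by exact_mod_cast hn
  have h2s : (0:ℝ) < 2 - s := by linarith
  haveI : Nontrivial (EuclideanSpace ℝ (Fin n)) := by
    apply Module.nontrivial_of_finrank_pos (R := ℝ)
    rw [finrank_euclideanSpace_fin]; omega
  set f₁ : ℝ → ℝ :=
    fun r => (((n:ℝ)-2) * r ^ (1-s) * (1 + r ^ (2-s)) ^ (-(((n:ℝ)-s)/(2-s)))) ^ (2:ℕ) with hf₁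
  set f₂ : ℝ → ℝ :=
    fun r => r ^ (-s) * ((1 + r ^ (2-s)) ^ (-(((n:ℝ)-2)/(2-s)))) ^ (2*((n:ℝ)-s)/((n:ℝ)-2))
    with hf₂
  have step1 : (∫ X : EuclideanSpace ℝ (Fin n), ‖gradient Φ X‖ ^ 2)
      = ∫ X : EuclideanSpace ℝ (Fin n), f₁ ‖X‖ := by
    apply integral_congr_ae
    have h0 : ∀ᵐ X : EuclideanSpace ℝ (Fin n), X ≠ 0 := by
      refine ae_iff.2 ?_
      simp only [ne_eq, not_not, setOf_eq_eq_singleton]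
      exact measure_singleton 0
    filter_upwards [h0] with X hX
    rw [aux_grad n hn s hs0 hs2 Φ hΦ X hX, hf₁]
  have step2 : (∫ X : EuclideanSpace ℝ (Fin n),
        ‖X‖ ^ (-s) * (Φ X) ^ (2 * ((n:ℝ) - s) / ((n:ℝ) - 2)))
      = ∫ X : EuclideanSpace ℝ (Fin n), f₂ ‖X‖ := by
    refine integral_congr_ae (Filter.Eventually.of_forall fun X => ?_)
    show ‖X‖ ^ (-s) * (Φ X) ^ (2 * ((n:ℝ) - s) / ((n:ℝ) - 2)) = f₂ ‖X‖
    rw [hΦ X, hf₂]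
  rw [step1, step2,
    integral_fun_norm_addHaar (volume : Measure (EuclideanSpace ℝ (Fin n))) f₁,
    integral_fun_norm_addHaar (volume : Measure (EuclideanSpace ℝ (Fin n))) f₂]
  simp only [finrank_euclideanSpace_fin]
  have hn2 : ((n:ℝ)) - 2 ≠ 0 := by linarith
  -- integrability
  have hca : (2-s) * (2*((n:ℝ)-s)/(2-s)) = 2*((n:ℝ)-s) := by field_simp
  have hα1pos : (0:ℝ) < 2*((n:ℝ)-s)/(2-s) - 1 := by nlinarith [hca]
  have hint1 : IntegrableOn
      (fun y : ℝ => y ^ ((n:ℝ)-1-s) * (1 + y ^ (2-s)) ^ (-(2*((n:ℝ)-s)/(2-s) - 1)))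
      (Ioi (0:ℝ)) := by
    refine aux_integ s _ _ hs2 (by linarith) (by linarith) ?_
    have : (2-s) * (2*((n:ℝ)-s)/(2-s) - 1) = 2*(n:ℝ)-s-2 := by field_simp; ring
    nlinarith
  have hint2 : IntegrableOn
      (fun y : ℝ => y ^ ((n:ℝ)-1-s) * (1 + y ^ (2-s)) ^ (-(2*((n:ℝ)-s)/(2-s))))
      (Ioi (0:ℝ)) := by
    refine aux_integ s _ _ hs2 (by linarith) (le_of_lt (div_pos (by linarith) h2s)) ?_
    have : (2-s) * (2*((n:ℝ)-s)/(2-s)) = 2*((n:ℝ)-s) := by field_simp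
    nlinarith
  -- pointwise identities on (0,∞)
  have e0 : ∀ y : ℝ, 0 < y → (y:ℝ) ^ (n-1 : ℕ) = y ^ ((n:ℝ)-1) := by
    intro y hy
    rw [← Real.rpow_natCast y (n-1)]
    congr 1
    rw [Nat.cast_sub (by omega)]
    norm_num
  have hpt1 : ∀ y ∈ Ioi (0:ℝ), y ^ (n-1:ℕ) • f₁ y
      = ((n:ℝ)-2)^2 * (y ^ ((n:ℝ)-1-s) * (1 + y ^ (2-s)) ^ (-(2*((n:ℝ)-s)/(2-s) - 1))
          - y ^ ((n:ℝ)-1-s) * (1 + y ^ (2-s)) ^ (-(2*((n:ℝ)-s)/(2-s)))) := by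
    intro y hy
    have hy0 : (0:ℝ) < y := hy
    have hu : (0:ℝ) < y ^ (2-s) := rpow_pos_of_pos hy0 _
    have hv : (0:ℝ) < 1 + y ^ (2-s) := by linarith
    rw [smul_eq_mul, hf₁]
    dsimp only
    rw [mul_pow, mul_pow, sq_rpow _ _ hy0.le, sq_rpow _ _ hv.le, e0 y hy0]
    have eA : (-(((n:ℝ)-s)/(2-s)))*2 = -(2*((n:ℝ)-s)/(2-s)) := by ring
    rw [eA]
    have ey : y ^ ((n:ℝ)-1) * y ^ ((1-s)*2) = y ^ ((n:ℝ)-1-s) * y ^ (2-s) := by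
      rw [← Real.rpow_add hy0, ← Real.rpow_add hy0]; ring_nf
    have e4 : y ^ (2-s) * (1 + y ^ (2-s)) ^ (-(2*((n:ℝ)-s)/(2-s)))
        = (1 + y ^ (2-s)) ^ (-(2*((n:ℝ)-s)/(2-s) - 1))
          - (1 + y ^ (2-s)) ^ (-(2*((n:ℝ)-s)/(2-s))) := by
      have h5 : (1 + y ^ (2-s)) ^ (-(2*((n:ℝ)-s)/(2-s) - 1))
          = (1 + y ^ (2-s)) * (1 + y ^ (2-s)) ^ (-(2*((n:ℝ)-s)/(2-s))) := by
        rw [show -(2*((n:ℝ)-s)/(2-s) - 1) = 1 + -(2*((n:ℝ)-s)/(2-s)) by ring,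
          Real.rpow_add hv, Real.rpow_one]
      rw [h5]; ring
    linear_combination (((n:ℝ)-2)^2 * ((1 + y ^ (2-s)) ^ (-(2*((n:ℝ)-s)/(2-s))))) * ey
      + (((n:ℝ)-2)^2 * (y ^ ((n:ℝ)-1-s))) * e4
  have hpt2 : ∀ y ∈ Ioi (0:ℝ), y ^ (n-1:ℕ) • f₂ y
      = y ^ ((n:ℝ)-1-s) * (1 + y ^ (2-s)) ^ (-(2*((n:ℝ)-s)/(2-s))) := by
    intro y hy
    have hy0 : (0:ℝ) < y := hy
    have hu : (0:ℝ) < y ^ (2-s) := rpow_pos_of_pos hy0 _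
    have hv : (0:ℝ) < 1 + y ^ (2-s) := by linarith
    rw [smul_eq_mul, hf₂]
    dsimp only
    rw [e0 y hy0]
    have eB : ((1 + y ^ (2-s)) ^ (-(((n:ℝ)-2)/(2-s)))) ^ (2*((n:ℝ)-s)/((n:ℝ)-2))
        = (1 + y ^ (2-s)) ^ (-(2*((n:ℝ)-s)/(2-s))) := by
      rw [← Real.rpow_mul hv.le]
      congr 1
      field_simp
    rw [eB]
    have ey2 : y ^ ((n:ℝ)-1) * y ^ (-s) = y ^ ((n:ℝ)-1-s) := by
      rw [← Real.rpow_add hy0]; ring_nf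
    linear_combination ((1 + y ^ (2-s)) ^ (-(2*((n:ℝ)-s)/(2-s)))) * ey2
  have e1 : (∫ y in Ioi (0:ℝ), y ^ (n-1:ℕ) • f₁ y)
      = ((n:ℝ)-2)^2 *
        ((∫ y in Ioi (0:ℝ), y ^ ((n:ℝ)-1-s) * (1 + y ^ (2-s)) ^ (-(2*((n:ℝ)-s)/(2-s) - 1)))
          - ∫ y in Ioi (0:ℝ), y ^ ((n:ℝ)-1-s) * (1 + y ^ (2-s)) ^ (-(2*((n:ℝ)-s)/(2-s)))) := by
    rw [setIntegral_congr_fun measurableSet_Ioi hpt1, integral_const_mul,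
      integral_sub hint1 hint2]
  have e2 : (∫ y in Ioi (0:ℝ), y ^ (n-1:ℕ) • f₂ y)
      = ∫ y in Ioi (0:ℝ), y ^ ((n:ℝ)-1-s) * (1 + y ^ (2-s)) ^ (-(2*((n:ℝ)-s)/(2-s))) :=
    setIntegral_congr_fun measurableSet_Ioi hpt2
  have ibp := aux_ibp s (n:ℝ) hs0 hs2 ha
  have key : ((n:ℝ)-2)^2 *
        ((∫ y in Ioi (0:ℝ), y ^ ((n:ℝ)-1-s) * (1 + y ^ (2-s)) ^ (-(2*((n:ℝ)-s)/(2-s) - 1)))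
          - ∫ y in Ioi (0:ℝ), y ^ ((n:ℝ)-1-s) * (1 + y ^ (2-s)) ^ (-(2*((n:ℝ)-s)/(2-s))))
      = ((n:ℝ)-2)*((n:ℝ)-s) *
          ∫ y in Ioi (0:ℝ), y ^ ((n:ℝ)-1-s) * (1 + y ^ (2-s)) ^ (-(2*((n:ℝ)-s)/(2-s))) := by
    linear_combination ((n:ℝ)-2) * ibp
  rw [e1, e2, key]
  rw [nsmul_eq_mul, nsmul_eq_mul, smul_eq_mul, smul_eq_mul]
  ring
end
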